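/- Let 1 < p < ∞, v ∈ Â_p with representation v = (Mh)^{1−p}u, u ∈ A₁. Then for every cube Q and every measurable E ⊆ Q, v(Q)/v(E) ≤ C_{n,p} ‖u‖_{A₁} (|Q|/|E|)^p; equivalently (|E|/|Q|)^p v(Q)/v(E) ≤ C_{n,p} ‖u‖_{A₁}. -/

import Mathlib

open MeasureTheory ENNReal NNReal Set Filter

noncomputable def wInt {n : ℕ} (v : (Fin n → ℝ) → ℝ) (E : Set (Fin n → ℝ)) : ℝ≥0∞ :=
  ∫⁻ x in E, ENNReal.ofReal (v x)

noncomputable def maxOp {n : ℕ} (h : (Fin n → ℝ) → ℝ) (x : Fin n → ℝ) : ℝ≥0∞ :=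
  ⨆ (c : Fin n → ℝ) (r : ℝ) (_ : 0 < r) (_ : x ∈ Metric.closedBall c r),
    (∫⁻ y in Metric.closedBall c r, ENNReal.ofReal |h y|) / volume (Metric.closedBall c r)

def IsA1 {n : ℕ} (u : (Fin n → ℝ) → ℝ) (C : ℝ) : Prop :=
  (∀ x, 0 ≤ u x) ∧ MeasureTheory.LocallyIntegrable u volume ∧
    ∀ (c : Fin n → ℝ) (r : ℝ), 0 < r →
      wInt u (Metric.closedBall c r) ≤
        ENNReal.ofReal C *
          essInf (fun y => ENNReal.ofReal (u y)) (volume.restrict (Metric.closedBall c r)) *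
          volume (Metric.closedBall c r)

noncomputable def distribF {n : ℕ} (v : (Fin n → ℝ) → ℝ) (g : (Fin n → ℝ) → ℝ≥0∞)
    (y : ℝ≥0∞) : ℝ≥0∞ :=
  wInt v {x | y < g x}

noncomputable def wkLorentz {n : ℕ} (p : ℝ) (v : (Fin n → ℝ) → ℝ)
    (g : (Fin n → ℝ) → ℝ≥0∞) : ℝ≥0∞ :=
  ⨆ y : ℝ≥0, (y : ℝ≥0∞) * (distribF v g y) ^ (1 / p)

noncomputable def lorentzOne {n : ℕ} (p : ℝ) (v : (Fin n → ℝ) → ℝ)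
    (g : (Fin n → ℝ) → ℝ≥0∞) : ℝ≥0∞ :=
  ENNReal.ofReal p * ∫⁻ y in Set.Ioi (0:ℝ), (distribF v g (ENNReal.ofReal y)) ^ (1 / p)

noncomputable def ofFun {n : ℕ} (f : (Fin n → ℝ) → ℝ) : (Fin n → ℝ) → ℝ≥0∞ :=
  fun x => ENNReal.ofReal |f x|

noncomputable def l1Norm {n : ℕ} (u f : (Fin n → ℝ) → ℝ) : ℝ≥0∞ :=
  ∫⁻ x, ENNReal.ofReal |f x| * ENNReal.ofReal (u x)

section AuxHA

open Metric

variable {n : ℕ} {h : (Fin n → ℝ) → ℝ}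

lemma volCB (c : Fin n → ℝ) {r : ℝ} (hr : 0 ≤ r) :
    volume (closedBall c r) = ENNReal.ofReal ((2*r)^n) := by
  rw [Real.volume_pi_closedBall c hr, Fintype.card_fin]

lemma volCB_pos (c : Fin n → ℝ) {r : ℝ} (hr : 0 < r) : 0 < volume (closedBall c r) := by
  rw [volCB c hr.le]; exact ENNReal.ofReal_pos.2 (by positivity)

lemma volCB_ne_top (c : Fin n → ℝ) {r : ℝ} (hr : 0 ≤ r) : volume (closedBall c r) ≠ ⊤ := by
  rw [volCB c hr]; exact ENNReal.ofReal_ne_top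

lemma volCB_scale (c : Fin n → ℝ) {r k : ℝ} (hr : 0 ≤ r) (hk : 0 < k) :
    volume (closedBall c (k*r)) = ENNReal.ofReal (k^n) * volume (closedBall c r) := by
  rw [volCB c hr, volCB c (by positivity), ← ENNReal.ofReal_mul (by positivity), ← mul_pow]
  congr 2; ring

lemma avg_le_maxOp {x c : Fin n → ℝ} {r : ℝ} (hr : 0 < r) (hx : x ∈ closedBall c r) :
    (∫⁻ y in closedBall c r, ENNReal.ofReal |h y|) / volume (closedBall c r) ≤ maxOp h x :=
  le_iSup_of_le c (le_iSup_of_le r (le_iSup_of_le hr (le_iSup_of_le hx le_rfl)))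

lemma intCB_ne_top (hh : LocallyIntegrable h volume) (c : Fin n → ℝ) (r : ℝ) :
    (∫⁻ y in closedBall c r, ENNReal.ofReal |h y|) ≠ ⊤ := by
  have := (hh.integrableOn_isCompact (isCompact_closedBall c r)).2
  rw [HasFiniteIntegral] at this
  refine ne_of_lt (lt_of_le_of_lt (le_of_eq ?_) this)
  refine lintegral_congr fun y => ?_
  rw [Real.enorm_eq_ofReal_abs]

lemma isOpen_maxOp_gt (hh : LocallyIntegrable h volume) (a : ℝ≥0∞) :
    IsOpen {x | a < maxOp h x} := by
  rw [Metric.isOpen_iff]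
  intro x hx
  simp only [mem_setOf_eq, maxOp, lt_iSup_iff] at hx
  obtain ⟨c, r, hr0, hxm, hlt⟩ := hx
  set I := ∫⁻ y in closedBall c r, ENNReal.ofReal |h y| with hI
  have hIne : I ≠ ⊤ := intCB_ne_top hh c r
  have hV : ∀ s : ℝ, 0 < s → volume (closedBall c s) ≠ 0 ∧ volume (closedBall c s) ≠ ⊤ :=
    fun s hs => ⟨(volCB_pos c hs).ne', volCB_ne_top c hs.le⟩
  have hmul : a * volume (closedBall c r) < I := by
    rw [← ENNReal.lt_div_iff_mul_lt (Or.inl (hV r hr0).1) (Or.inl (hV r hr0).2)]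
    exact hlt
  have hcont : ContinuousAt (fun s : ℝ => a * volume (closedBall c s)) r := by
    have ha : a ≠ ⊤ := by
      intro hat; rw [hat] at hmul
      exact (not_le.2 hmul) (le_top.trans (le_of_eq ((ENNReal.top_mul (hV r hr0).1).symm)))
    have h1 : ContinuousAt (fun s : ℝ => ENNReal.ofReal ((2*s)^n)) r :=
      (ENNReal.continuous_ofReal.comp (by continuity)).continuousAt
    have h2 : ContinuousAt (fun s : ℝ => a * ENNReal.ofReal ((2*s)^n)) r :=
      (ENNReal.continuous_const_mul ha).continuousAt.comp h1
    refine h2.congr ?_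
    filter_upwards [eventually_gt_nhds hr0] with s hs
    rw [volCB c hs.le]
  have hev : ∀ᶠ s in nhdsWithin r (Ioi r), a * volume (closedBall c s) < I := by
    have ht : Tendsto (fun s : ℝ => a * volume (closedBall c s)) (nhdsWithin r (Ioi r))
        (nhds (a * volume (closedBall c r))) := hcont.tendsto.mono_left nhdsWithin_le_nhds
    exact ht.eventually_lt_const hmul
  obtain ⟨r', hr'lt, hr'mem⟩ := (hev.and self_mem_nhdsWithin).exists
  have hr'mem' : r < r' := hr'mem
  refine ⟨r' - r, by linarith, fun y hy => ?_⟩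
  rw [mem_ball] at hy
  have hyc : y ∈ closedBall c r' := by
    rw [mem_closedBall]
    have h1 : dist y c ≤ dist y x + dist x c := dist_triangle y x c
    rw [mem_closedBall] at hxm
    linarith
  have hle : I ≤ ∫⁻ z in closedBall c r', ENNReal.ofReal |h z| :=
    lintegral_mono_set (closedBall_subset_closedBall hr'mem'.le)
  have : a < (∫⁻ z in closedBall c r', ENNReal.ofReal |h z|) / volume (closedBall c r') := by
    rw [ENNReal.lt_div_iff_mul_lt (Or.inl (hV r' (hr0.trans hr'mem')).1)
      (Or.inl (hV r' (hr0.trans hr'mem')).2)]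
    exact lt_of_lt_of_le hr'lt hle
  exact lt_of_lt_of_le this (avg_le_maxOp (hr0.trans hr'mem') hyc)

lemma avg_le_essInf {c : Fin n → ℝ} {r : ℝ} {c₂ : Fin n → ℝ} {r₂ : ℝ}
    (hr₂ : 0 < r₂) (hsub : closedBall c r ⊆ closedBall c₂ r₂) :
    (∫⁻ y in closedBall c₂ r₂, ENNReal.ofReal |h y|) / volume (closedBall c₂ r₂) ≤
      essInf (maxOp h) (volume.restrict (closedBall c r)) := by
  refine le_essInf_of_ae_le _ ?_
  refine (ae_restrict_mem measurableSet_closedBall).mono fun y hy => ?_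
  exact avg_le_maxOp hr₂ (hsub hy)

lemma bigBall_avg {c x c' : Fin n → ℝ} {r r' : ℝ} (hr : 0 < r) (hrr' : r < r')
    (hx : x ∈ closedBall c r) (hx' : x ∈ closedBall c' r') :
    (∫⁻ y in closedBall c' r', ENNReal.ofReal |h y|) / volume (closedBall c' r') ≤
      ENNReal.ofReal (3^n) * essInf (maxOp h) (volume.restrict (closedBall c r)) := by
  have hr' : 0 < r' := hr.trans hrr'
  have hsub1 : closedBall c' r' ⊆ closedBall c (3*r') := by
    intro z hz
    rw [mem_closedBall] at hz hx hx' ⊢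
    have h4 : dist z c ≤ dist z c' + dist c' x + dist x c := dist_triangle4 z c' x c
    have h5 : dist c' x ≤ r' := by rw [dist_comm]; exact hx'
    linarith
  have hsub2 : closedBall c r ⊆ closedBall c (3*r') :=
    closedBall_subset_closedBall (by linarith)
  have h3 : (0:ℝ) < 3*r' := by linarith
  have h3n0 : ENNReal.ofReal ((3:ℝ)^n) ≠ 0 := (ENNReal.ofReal_pos.2 (by positivity)).ne'
  have hEI := avg_le_essInf (h := h) h3 hsub2
  have hV3 : volume (closedBall c (3*r')) =
      ENNReal.ofReal ((3:ℝ)^n) * volume (closedBall c' r') := by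
    rw [volCB c h3.le, volCB c' hr'.le, ← ENNReal.ofReal_mul (by positivity), ← mul_pow]
    congr 2; ring
  calc (∫⁻ y in closedBall c' r', ENNReal.ofReal |h y|) / volume (closedBall c' r')
      ≤ (∫⁻ y in closedBall c (3*r'), ENNReal.ofReal |h y|) / volume (closedBall c' r') := by
        gcongr
    _ = ENNReal.ofReal ((3:ℝ)^n) *
        ((∫⁻ y in closedBall c (3*r'), ENNReal.ofReal |h y|) /
          volume (closedBall c (3*r'))) := by
        rw [hV3, ← mul_div_assoc, ENNReal.mul_div_mul_left _ _ h3n0 ENNReal.ofReal_ne_top]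
    _ ≤ ENNReal.ofReal ((3:ℝ)^n) *
        essInf (maxOp h) (volume.restrict (closedBall c r)) := by
        exact mul_le_mul_right hEI _

lemma measure_maxOp_gt (hh : LocallyIntegrable h volume) {c : Fin n → ℝ} {r : ℝ} (hr : 0 < r)
    {L : ℝ≥0∞}
    (hLB : ENNReal.ofReal ((3:ℝ)^n) * essInf (maxOp h) (volume.restrict (closedBall c r)) < L) :
    volume ({x | L < maxOp h x} ∩ closedBall c r) * L ≤
      ENNReal.ofReal ((4:ℝ)^n) * ∫⁻ y in closedBall c (3*r), ENNReal.ofReal |h y| := by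
  set S := {x | L < maxOp h x} ∩ closedBall c r with hS
  have hch : ∀ a : Fin n → ℝ, ∃ cr : (Fin n → ℝ) × ℝ, a ∈ S →
      0 < cr.2 ∧ cr.2 ≤ r ∧ a ∈ closedBall cr.1 cr.2 ∧
        volume (closedBall cr.1 cr.2) * L ≤
          ∫⁻ y in closedBall cr.1 cr.2, ENNReal.ofReal |h y| := by
    intro a
    by_cases ha : a ∈ S
    · obtain ⟨haL, haQ⟩ := ha
      rw [mem_setOf_eq, maxOp] at haL
      simp only [lt_iSup_iff] at haL
      obtain ⟨c', r', hr'0, hmem, havg⟩ := haL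
      have hr'le : r' ≤ r := by
        by_contra hcon
        push_neg at hcon
        exact absurd (lt_of_lt_of_le havg (bigBall_avg hr hcon haQ hmem)) (not_lt.2 hLB.le)
      have hmul : volume (closedBall c' r') * L ≤
          ∫⁻ y in closedBall c' r', ENNReal.ofReal |h y| := by
        rw [mul_comm]
        exact le_of_lt ((ENNReal.lt_div_iff_mul_lt (Or.inl (volCB_pos c' hr'0).ne')
          (Or.inl (volCB_ne_top c' hr'0.le))).1 havg)
      exact ⟨(c', r'), fun _ => ⟨hr'0, hr'le, hmem, hmul⟩⟩
    · exact ⟨(a, 1), fun h' => absurd h' ha⟩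
  choose g hg using hch
  obtain ⟨U, hUS, hUdisj, hUcov⟩ :=
    Vitali.exists_disjoint_subfamily_covering_enlargement_closedBall S
      (fun a => (g a).1) (fun a => (g a).2) r (fun a ha => (hg a ha).2.1) 4 (by norm_num)
  have hUc : U.Countable := by
    refine hUdisj.countable_of_nonempty_interior fun b hb => ?_
    exact (Metric.nonempty_ball.2 (hg b (hUS hb)).1).mono Metric.ball_subset_interior_closedBall
  have hScov : S ⊆ ⋃ b ∈ U, closedBall (g b).1 (4*(g b).2) := by
    intro a ha
    obtain ⟨b, hb, hsub⟩ := hUcov a ha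
    exact mem_biUnion hb (hsub (hg a ha).2.2.1)
  set ν := volume.withDensity (fun y => ENNReal.ofReal |h y|) with hν
  have hballQ3 : ∀ b ∈ U, closedBall (g b).1 (g b).2 ⊆ closedBall c (3*r) := by
    intro b hb z hz
    have hbS := hUS hb
    obtain ⟨hpos, hle, hbmem, -⟩ := hg b hbS
    rw [mem_closedBall] at hz hbmem ⊢
    have h4 : dist z c ≤ dist z (g b).1 + dist (g b).1 b + dist b c := dist_triangle4 _ _ _ _
    have h5 : dist (g b).1 b ≤ (g b).2 := by rw [dist_comm]; exact hbmem
    have h6 : dist b c ≤ r := (hUS hb).2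
    linarith
  calc volume S * L ≤ (∑' b : U, volume (closedBall (g b).1 (4*(g b).2))) * L := by
        gcongr
        exact (measure_mono hScov).trans (measure_biUnion_le volume hUc _)
    _ = (∑' b : U, ENNReal.ofReal ((4:ℝ)^n) * volume (closedBall (g b).1 (g b).2)) * L := by
        congr 1
        refine tsum_congr fun b => ?_
        have hpos := (hg b (hUS b.2)).1
        rw [volCB _ (by positivity : (0:ℝ) ≤ 4*(g b.1).2), volCB _ hpos.le,
          ← ENNReal.ofReal_mul (by positivity), ← mul_pow]
        congr 2; ring
    _ = ENNReal.ofReal ((4:ℝ)^n) * ∑' b : U, volume (closedBall (g b).1 (g b).2) * L := by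
        rw [ENNReal.tsum_mul_left, ENNReal.tsum_mul_right, mul_assoc]
    _ ≤ ENNReal.ofReal ((4:ℝ)^n) * ∑' b : U, ν (closedBall (g b).1 (g b).2) := by
        gcongr with b
        rw [hν, withDensity_apply _ measurableSet_closedBall]
        exact (hg b (hUS b.2)).2.2.2
    _ = ENNReal.ofReal ((4:ℝ)^n) * ν (⋃ b ∈ U, closedBall (g b).1 (g b).2) := by
        rw [measure_biUnion hUc hUdisj fun b _ => measurableSet_closedBall]
    _ ≤ ENNReal.ofReal ((4:ℝ)^n) * ν (closedBall c (3*r)) := by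
        exact mul_le_mul_right (measure_mono (iUnion₂_subset hballQ3)) _
    _ = ENNReal.ofReal ((4:ℝ)^n) * ∫⁻ y in closedBall c (3*r), ENNReal.ofReal |h y| := by
        rw [hν, withDensity_apply _ measurableSet_closedBall]

end AuxHA

open Metric in
/-- `A_p`-type comparison for `Â_p` weights: if `v = (Mh)^{1−p} u` with `u ∈ A₁` and
`1 < p < ∞`, then for every cube `Q` and measurable `E ⊆ Q`,
`|E|^p v(Q) ≤ C_{n,p} ‖u‖_{A₁} |Q|^p v(E)`, i.e. `v(Q)/v(E) ≤ C_{n,p}‖u‖_{A₁}(|Q|/|E|)^p`. -/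
theorem hatAp_comparison (n : ℕ) (p : ℝ) (hp : 1 < p) :
    ∃ C : ℝ, 0 < C ∧
      ∀ (h u : (Fin n → ℝ) → ℝ) (Cu : ℝ), IsA1 u Cu → 1 ≤ Cu →
        MeasureTheory.LocallyIntegrable h volume →
        (∀ᵐ x, 0 < maxOp h x) → (∀ᵐ x, maxOp h x < ⊤) →
        ∀ (c : Fin n → ℝ) (r : ℝ), 0 < r →
          ∀ E : Set (Fin n → ℝ), MeasurableSet E → E ⊆ Metric.closedBall c r →
            volume E ^ p * wInt (fun x => (maxOp h x).toReal ^ (1 - p) * u x)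
                (Metric.closedBall c r) ≤
              ENNReal.ofReal (C * Cu) * volume (Metric.closedBall c r) ^ p *
                wInt (fun x => (maxOp h x).toReal ^ (1 - p) * u x) E := by
  classical
  have hKpos : (0:ℝ) < 2 * 12^n := by positivity
  refine ⟨2 * (2 * 12^n)^(p-1), by positivity, ?_⟩
  intro h u Cu hA1 hCu hh hpos hfin c r hr E hEmeas hEQ
  obtain ⟨hu0, huloc, huA1⟩ := hA1
  set K : ℝ := 2 * 12^n with hK
  set v := fun x => (maxOp h x).toReal ^ (1 - p) * u x with hv
  set Q := Metric.closedBall c r with hQ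
  set B := essInf (maxOp h) (volume.restrict Q) with hB
  set m := essInf (fun y => ENNReal.ofReal (u y)) (volume.restrict Q) with hm
  have hp0 : (0:ℝ) < p := lt_trans one_pos hp
  have h1p : 1 - p ≤ 0 := by linarith
  have hQpos : 0 < volume Q := volCB_pos c hr
  have hQtop : volume Q ≠ ⊤ := volCB_ne_top c hr.le
  rcases eq_or_ne (volume E) 0 with hE0 | hE0
  · rw [hE0, ENNReal.zero_rpow_of_pos hp0, zero_mul]; exact zero_le
  have hEtop : volume E ≠ ⊤ := fun ht => hQtop (top_le_iff.1 (ht ▸ measure_mono hEQ))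
  set Et := (volume E).toReal with hEt'
  set Qt := (volume Q).toReal with hQt'
  have hEt : 0 < Et := ENNReal.toReal_pos hE0 hEtop
  have hQt : 0 < Qt := ENNReal.toReal_pos hQpos.ne' hQtop
  have hEQt : Et ≤ Qt := ENNReal.toReal_mono hQtop (measure_mono hEQ)
  have hEof : volume E = ENNReal.ofReal Et := (ENNReal.ofReal_toReal hEtop).symm
  have hQof : volume Q = ENNReal.ofReal Qt := (ENNReal.ofReal_toReal hQtop).symm
  have hQne : volume.restrict Q ≠ 0 := by
    rw [Ne, Measure.restrict_eq_zero]; exact hQpos.ne'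
  haveI : (ae (volume.restrict Q)).NeBot := ae_neBot.2 hQne
  have haeB : ∀ᵐ x ∂(volume.restrict Q), B ≤ maxOp h x := ae_essInf_le (hf := by isBoundedDefault)
  have haefin : ∀ᵐ x ∂(volume.restrict Q), maxOp h x < ⊤ := ae_restrict_of_ae hfin
  have haepos : ∀ᵐ x ∂(volume.restrict Q), 0 < maxOp h x := ae_restrict_of_ae hpos
  have hBtop : B ≠ ⊤ := by
    obtain ⟨x, hx1, hx2⟩ := (haeB.and haefin).exists
    exact (lt_of_le_of_lt hx1 hx2).ne
  have h3r : (0:ℝ) < 3*r := by linarith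
  have hQ3sub : Q ⊆ closedBall c (3*r) := closedBall_subset_closedBall (by linarith)
  have hI3 : (∫⁻ y in closedBall c (3*r), ENNReal.ofReal |h y|) ≤
      ENNReal.ofReal ((3:ℝ)^n) * B * volume Q := by
    have h1 := avg_le_essInf (h := h) h3r hQ3sub
    rw [ENNReal.div_le_iff_le_mul (Or.inl (volCB_pos c h3r).ne')
      (Or.inl (volCB_ne_top c h3r.le))] at h1
    calc (∫⁻ y in closedBall c (3*r), ENNReal.ofReal |h y|)
        ≤ B * volume (closedBall c (3*r)) := h1
      _ = ENNReal.ofReal ((3:ℝ)^n) * B * volume Q := by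
          rw [volCB_scale c hr.le (by norm_num : (0:ℝ) < 3)]
          ring
  have hBpos : 0 < B := by
    rcases eq_or_ne B 0 with hB0 | hB0
    · exfalso
      have hI30 : (∫⁻ y in closedBall c (3*r), ENNReal.ofReal |h y|) = 0 := by
        refine le_antisymm ?_ zero_le
        rw [hB0, mul_zero, zero_mul] at hI3
        exact hI3
      have hMh0 : ∀ x ∈ Q, maxOp h x = 0 := by
        intro x hx
        refine le_antisymm ?_ zero_le
        rw [maxOp]
        refine iSup_le fun c' => iSup_le fun r' => iSup_le fun hr' => iSup_le fun hx' => ?_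
        rcases le_or_gt r' r with hle | hgt
        · have hsub' : closedBall c' r' ⊆ closedBall c (3*r) := by
            intro z hz
            rw [mem_closedBall] at hz hx hx' ⊢
            have h4 : dist z c ≤ dist z c' + dist c' x + dist x c := dist_triangle4 z c' x c
            have h5 : dist c' x ≤ r' := by rw [dist_comm]; exact hx'
            linarith
          have hzero : (∫⁻ y in closedBall c' r', ENNReal.ofReal |h y|) = 0 :=
            le_antisymm ((lintegral_mono_set hsub').trans hI30.le) zero_le
          rw [hzero, ENNReal.zero_div]
        · have hbb := bigBall_avg (h := h) hr hgt hx hx'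
          rw [← hB, hB0, mul_zero] at hbb
          exact hbb
      obtain ⟨x, hx1, hx2⟩ :=
        (haepos.and (ae_restrict_mem measurableSet_closedBall)).exists
      rw [hMh0 x hx2] at hx1
      exact lt_irrefl _ hx1
    · exact pos_iff_ne_zero.2 hB0
  set Bt := B.toReal with hBt'
  have hBt : 0 < Bt := ENNReal.toReal_pos hBpos.ne' hBtop
  have hBof : B = ENNReal.ofReal Bt := (ENNReal.ofReal_toReal hBtop).symm
  set lam := K * Bt * Qt / Et with hlam
  have hlam0 : 0 < lam := by positivity
  set L := ENNReal.ofReal lam with hLdef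
  have hL0 : L ≠ 0 := (ENNReal.ofReal_pos.2 hlam0).ne'
  have hLB : ENNReal.ofReal ((3:ℝ)^n) * B < L := by
    rw [hBof, ← ENNReal.ofReal_mul (by positivity), hLdef]
    refine (ENNReal.ofReal_lt_ofReal_iff hlam0).2 ?_
    have h1 : K * Bt ≤ lam := by
      rw [hlam, le_div_iff₀ hEt]
      have : K * Bt * Et ≤ K * Bt * Qt := by
        have hKB : 0 ≤ K * Bt := by positivity
        nlinarith
      linarith
    have h2 : (3:ℝ)^n * Bt < K * Bt := by
      have h3 : (3:ℝ)^n < K := by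
        rw [hK]
        have : (3:ℝ)^n ≤ 12^n := pow_le_pow_left₀ (by norm_num) (by norm_num) n
        nlinarith [pow_pos (show (0:ℝ) < 12 by norm_num) n]
      nlinarith
    linarith
  have hhigh := measure_maxOp_gt hh hr (L := L) hLB
  -- μ S ≤ μ E / 2
  have hS2 : volume ({x | L < maxOp h x} ∩ Q) ≤ volume E / 2 := by
    have h1 : volume ({x | L < maxOp h x} ∩ Q) * L ≤
        ENNReal.ofReal ((12:ℝ)^n * Bt * Qt) := by
      refine hhigh.trans ?_
      calc ENNReal.ofReal ((4:ℝ)^n) * ∫⁻ y in closedBall c (3*r), ENNReal.ofReal |h y|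
          ≤ ENNReal.ofReal ((4:ℝ)^n) * (ENNReal.ofReal ((3:ℝ)^n) * B * volume Q) :=
            mul_le_mul_right hI3 _
        _ = ENNReal.ofReal ((12:ℝ)^n * Bt * Qt) := by
            rw [hBof, hQof, ← ENNReal.ofReal_mul (by positivity),
              ← ENNReal.ofReal_mul (by positivity), ← ENNReal.ofReal_mul (by positivity)]
            congr 1
            rw [show (12:ℝ)^n = 4^n * 3^n by rw [← mul_pow]; norm_num]
            ring
    have h2 : volume ({x | L < maxOp h x} ∩ Q) ≤ ENNReal.ofReal ((12:ℝ)^n * Bt * Qt) / L :=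
      (ENNReal.le_div_iff_mul_le (Or.inl hL0) (Or.inl ENNReal.ofReal_ne_top)).2 h1
    refine h2.trans (le_of_eq ?_)
    rw [hLdef, ← ENNReal.ofReal_div_of_pos hlam0, hEof,
      show (12:ℝ)^n * Bt * Qt / lam = Et / 2 by
        rw [hlam, hK]
        field_simp]
    rw [ENNReal.ofReal_div_of_pos (by norm_num : (0:ℝ) < 2)]
    norm_num
  -- upper bound for v on Q
  have hvQ : wInt v Q ≤ ENNReal.ofReal (Bt^(1-p)) * (ENNReal.ofReal Cu * m * volume Q) := by
    have hae : ∀ᵐ x ∂(volume.restrict Q),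
        ENNReal.ofReal (v x) ≤ ENNReal.ofReal (Bt^(1-p)) * ENNReal.ofReal (u x) := by
      filter_upwards [haeB, haefin] with x hx1 hx2
      have ht : Bt ≤ (maxOp h x).toReal := ENNReal.toReal_mono hx2.ne hx1
      have hrp : (maxOp h x).toReal^(1-p) ≤ Bt^(1-p) :=
        Real.rpow_le_rpow_of_nonpos hBt ht h1p
      rw [hv, ← ENNReal.ofReal_mul (by positivity : (0:ℝ) ≤ Bt^(1-p))]
      exact ENNReal.ofReal_le_ofReal (mul_le_mul_of_nonneg_right hrp (hu0 x))
    calc wInt v Q = ∫⁻ x in Q, ENNReal.ofReal (v x) := rfl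
      _ ≤ ∫⁻ x in Q, ENNReal.ofReal (Bt^(1-p)) * ENNReal.ofReal (u x) :=
          lintegral_mono_ae hae
      _ = ENNReal.ofReal (Bt^(1-p)) * wInt u Q := by
          rw [wInt]
          exact lintegral_const_mul' _ _ ENNReal.ofReal_ne_top
      _ ≤ ENNReal.ofReal (Bt^(1-p)) * (ENNReal.ofReal Cu * m * volume Q) :=
          mul_le_mul_right (huA1 c r hr) _
  -- lower bound for v on E
  set T := E ∩ {x | L < maxOp h x}ᶜ with hT
  have hTmeas : MeasurableSet T :=
    hEmeas.inter (isOpen_maxOp_gt hh L).measurableSet.compl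
  have hTQ : T ⊆ Q := fun x hx => hEQ hx.1
  have hTvol : volume E / 2 ≤ volume T := by
    have hsplit : volume E ≤ volume T + volume E / 2 := by
      have hcov : E ⊆ T ∪ ({x | L < maxOp h x} ∩ Q) := by
        intro x hx
        by_cases hxL : L < maxOp h x
        · exact Or.inr ⟨hxL, hEQ hx⟩
        · exact Or.inl ⟨hx, hxL⟩
      refine ((measure_mono hcov).trans (measure_union_le _ _)).trans ?_
      exact add_le_add_right hS2 _
    calc volume E / 2 = volume E - volume E / 2 := (ENNReal.sub_half hEtop).symm
      _ ≤ volume T := tsub_le_iff_right.2 hsplit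
  have hvE : ENNReal.ofReal (lam^(1-p)) * (m * (volume E / 2)) ≤ wInt v E := by
    have hae : ∀ᵐ x ∂(volume.restrict T),
        ENNReal.ofReal (lam^(1-p)) * m ≤ ENNReal.ofReal (v x) := by
      have haem : ∀ᵐ x ∂(volume.restrict T), m ≤ ENNReal.ofReal (u x) :=
        ae_restrict_of_ae_restrict_of_subset hTQ (ae_essInf_le (hf := by isBoundedDefault))
      filter_upwards [ae_restrict_of_ae hpos, ae_restrict_mem hTmeas, haem]
        with x hx1 hx2 hxm
      have hup : maxOp h x ≤ L := not_lt.1 hx2.2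
      have hne : maxOp h x ≠ ⊤ := (hup.trans_lt (by rw [hLdef]; exact ENNReal.ofReal_lt_top)).ne
      have ht0 : 0 < (maxOp h x).toReal := ENNReal.toReal_pos hx1.ne' hne
      have htl : (maxOp h x).toReal ≤ lam := by
        rw [hLdef] at hup
        exact ENNReal.toReal_le_of_le_ofReal hlam0.le hup
      have hrp : lam^(1-p) ≤ (maxOp h x).toReal^(1-p) :=
        Real.rpow_le_rpow_of_nonpos ht0 htl h1p
      calc ENNReal.ofReal (lam^(1-p)) * m
          ≤ ENNReal.ofReal (lam^(1-p)) * ENNReal.ofReal (u x) := mul_le_mul_right hxm _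
        _ ≤ ENNReal.ofReal (v x) := by
            rw [hv, ← ENNReal.ofReal_mul (by positivity : (0:ℝ) ≤ lam^(1-p))]
            exact ENNReal.ofReal_le_ofReal (mul_le_mul_of_nonneg_right hrp (hu0 x))
    calc ENNReal.ofReal (lam^(1-p)) * (m * (volume E / 2))
        ≤ ENNReal.ofReal (lam^(1-p)) * (m * volume T) := by
          exact mul_le_mul_right (mul_le_mul_right hTvol _) _
      _ = ∫⁻ _ in T, ENNReal.ofReal (lam^(1-p)) * m := by
          rw [setLIntegral_const, mul_assoc]
      _ ≤ ∫⁻ x in T, ENNReal.ofReal (v x) := lintegral_mono_ae hae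
      _ ≤ wInt v E := lintegral_mono_set inter_subset_left
  -- real coefficient identity
  have hEp0 : Et ^ p ≠ 0 := (Real.rpow_pos_of_pos hEt p).ne'
  have hreal : (2*K^(p-1)) * Cu * (Qt^p * (lam^(1-p) * (Et/2))) =
      Et^p * Bt^(1-p) * Cu * Qt := by
    have hlamr : lam^(1-p) = K^(1-p) * Bt^(1-p) * Qt^(1-p) / Et^(1-p) := by
      rw [hlam, Real.div_rpow (by positivity) hEt.le,
        Real.mul_rpow (by positivity) hQt.le, Real.mul_rpow hKpos.le hBt.le]
    have hKK : K^(p-1) * K^(1-p) = 1 := by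
      rw [← Real.rpow_add hKpos, show p-1+(1-p) = 0 by ring, Real.rpow_zero]
    have hQQ : Qt^p * Qt^(1-p) = Qt := by
      rw [← Real.rpow_add hQt, show p+(1-p) = 1 by ring, Real.rpow_one]
    have hEE : Et / Et^(1-p) = Et^p := by
      rw [Real.rpow_sub hEt, Real.rpow_one]
      field_simp
    calc (2*K^(p-1)) * Cu * (Qt^p * (lam^(1-p) * (Et/2)))
        = (K^(p-1) * K^(1-p)) * (Qt^p * Qt^(1-p)) * Bt^(1-p) * (Et / Et^(1-p)) * Cu := by
          rw [hlamr]; ring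
      _ = Et^p * Bt^(1-p) * Cu * Qt := by rw [hKK, hQQ, hEE]; ring
  -- coefficient inequality in ℝ≥0∞
  have hcoeff : volume E ^ p * ENNReal.ofReal (Bt^(1-p)) * ENNReal.ofReal Cu * volume Q ≤
      ENNReal.ofReal (2*(2*12^n)^(p-1) * Cu) * volume Q ^ p *
        (ENNReal.ofReal (lam^(1-p)) * (volume E / 2)) := by
    have hCu0 : (0:ℝ) < Cu := lt_of_lt_of_le one_pos hCu
    have hhalf : volume E / 2 = ENNReal.ofReal (Et/2) := by
      rw [hEof, ENNReal.ofReal_div_of_pos (by norm_num : (0:ℝ) < 2)]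
      norm_num
    rw [hhalf, hEof, hQof, ENNReal.ofReal_rpow_of_pos hEt, ENNReal.ofReal_rpow_of_pos hQt,
      ← ENNReal.ofReal_mul (by positivity), ← ENNReal.ofReal_mul (by positivity),
      ← ENNReal.ofReal_mul (by positivity), ← ENNReal.ofReal_mul (by positivity),
      ← ENNReal.ofReal_mul (by positivity), ← ENNReal.ofReal_mul (by positivity)]
    refine ENNReal.ofReal_le_ofReal (le_of_eq ?_)
    rw [← hK]
    rw [← hreal]
    ring
  -- final assembly
  calc volume E ^ p * wInt v Q
      ≤ volume E ^ p * (ENNReal.ofReal (Bt^(1-p)) * (ENNReal.ofReal Cu * m * volume Q)) :=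
        mul_le_mul_right hvQ _
    _ = (volume E ^ p * ENNReal.ofReal (Bt^(1-p)) * ENNReal.ofReal Cu * volume Q) * m := by
        ring
    _ ≤ (ENNReal.ofReal (2*(2*12^n)^(p-1) * Cu) * volume Q ^ p *
          (ENNReal.ofReal (lam^(1-p)) * (volume E / 2))) * m :=
        mul_le_mul_left hcoeff _
    _ = ENNReal.ofReal (2*(2*12^n)^(p-1) * Cu) * volume Q ^ p *
          (ENNReal.ofReal (lam^(1-p)) * (m * (volume E / 2))) := by
        ring
    _ ≤ ENNReal.ofReal (2*(2*12^n)^(p-1) * Cu) * volume Q ^ p * wInt v E :=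
        mul_le_mul_right hvE _
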